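/- There exists an absolute constant C > 0 such that for every ε ∈ (0,1) and every n ∈ ℕ there exists an ε-synchronization string of length n over an alphabet Σ of size at most C·ε⁻². -/

import Mathlib

/-- The length of a longest common subsequence of two strings (lists). -/
noncomputable def lcsLen {α : Type*} (S T : List α) : ℕ :=
  sSup {n | ∃ U : List α, U.length = n ∧ U.Sublist S ∧ U.Sublist T}

/-- The edit distance (insertions/deletions) between two strings, via
`ED(S,T) = |S| + |T| - 2·LCS(S,T)`. -/
noncomputable def editDistance {α : Type*} (S T : List α) : ℕ :=
  S.length + T.length - 2 * lcsLen S T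

/-- `strSlice S a b` is the substring `S[a, b)` of `S` (1-indexed, `b` excluded). -/
def strSlice {α : Type*} (S : List α) (a b : ℕ) : List α :=
  (S.drop (a - 1)).take (b - a)

/-- `islice f a b` is the substring `f[a, b)` of the infinite string `f`
(1-indexed, `b` excluded). -/
def islice {α : Type*} (f : ℕ → α) (a b : ℕ) : List α :=
  (List.range (b - a)).map fun t => f (a + t)

/-- `S` is an ε-synchronization string: for all `1 ≤ i < j < k ≤ |S| + 1`,
`ED(S[i,j), S[j,k)) > (1-ε)(k-i)`. -/
def IsSyncString {α : Type*} (ε : ℝ) (S : List α) : Prop :=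
  ∀ i j k : ℕ, 1 ≤ i → i < j → j < k → k ≤ S.length + 1 →
    (1 - ε) * ((k : ℝ) - (i : ℝ)) < (editDistance (strSlice S i j) (strSlice S j k) : ℝ)

/-- `S` is an ε-synchronization circle: every cyclic rotation of `S` is an
ε-synchronization string. -/
def IsSyncCircle {α : Type*} (ε : ℝ) (S : List α) : Prop :=
  ∀ i : ℕ, 1 ≤ i → i ≤ S.length → IsSyncString ε (S.rotate (i - 1))

/-- An infinite ε-synchronization string (1-indexed). -/
def IsInfSyncString {α : Type*} (ε : ℝ) (f : ℕ → α) : Prop :=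
  ∀ i j k : ℕ, 1 ≤ i → i < j → j < k →
    (1 - ε) * ((k : ℝ) - (i : ℝ)) < (editDistance (islice f i j) (islice f j k) : ℝ)

/-- `S` is a `c`-long-distance ε-synchronization string: for all
`1 ≤ i < j ≤ i' < j' ≤ |S| + 1` with `l = (j-i)+(j'-i')`, if the two intervals
are adjacent (`i' = j`) or `l > c · log |S|`, then
`ED(S[i,j), S[i',j')) > (1-ε)·l`. -/
noncomputable def IsLongDistSyncString {α : Type*} (c ε : ℝ) (S : List α) : Prop :=
  ∀ i j i' j' : ℕ, 1 ≤ i → i < j → j ≤ i' → i' < j' → j' ≤ S.length + 1 →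
    (i' = j ∨ c * Real.log (S.length : ℝ) < ((j : ℝ) - i) + ((j' : ℝ) - i')) →
    (1 - ε) * (((j : ℝ) - i) + ((j' : ℝ) - i')) <
      (editDistance (strSlice S i j) (strSlice S i' j') : ℝ)

/-- An infinite weak ε-synchronization string: for all `1 ≤ i < j < k`,
`ED(S[i,j), S[j,k)) ≥ ⌊(1-ε)(k-i)⌋`. -/
def IsInfWeakSyncString {α : Type*} (ε : ℝ) (f : ℕ → α) : Prop :=
  ∀ i j k : ℕ, 1 ≤ i → i < j → j < k →
    ((⌊(1 - ε) * ((k : ℝ) - (i : ℝ))⌋ : ℤ) : ℝ) ≤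
      (editDistance (islice f i j) (islice f j k) : ℝ)

set_option linter.unusedSectionVars false
set_option maxHeartbeats 1000000
open Finset

namespace SyncAux

lemma lcs_set_nonempty (S T : List α) :
    {n | ∃ U : List α, U.length = n ∧ U.Sublist S ∧ U.Sublist T}.Nonempty :=
  ⟨0, [], rfl, List.nil_sublist _, List.nil_sublist _⟩

lemma lcs_set_bdd (S T : List α) :
    BddAbove {n | ∃ U : List α, U.length = n ∧ U.Sublist S ∧ U.Sublist T} :=
  ⟨S.length, fun _ ⟨_, hU, hS, _⟩ => hU ▸ hS.length_le⟩

lemma le_lcsLen {U S T : List α} (h : U.Sublist S) (h' : U.Sublist T) :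
    U.length ≤ lcsLen S T :=
  le_csSup (lcs_set_bdd S T) ⟨U, rfl, h, h'⟩

lemma lcsLen_le_left (S T : List α) : lcsLen S T ≤ S.length :=
  csSup_le (lcs_set_nonempty S T) (fun _ ⟨_, hU, hS, _⟩ => hU ▸ hS.length_le)

lemma lcsLen_le_right (S T : List α) : lcsLen S T ≤ T.length :=
  csSup_le (lcs_set_nonempty S T) (fun _ ⟨_, hU, _, hT⟩ => hU ▸ hT.length_le)

lemma exists_lcs (S T : List α) :
    ∃ U : List α, U.length = lcsLen S T ∧ U.Sublist S ∧ U.Sublist T :=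
  Nat.sSup_mem (lcs_set_nonempty S T) (lcs_set_bdd S T)

lemma editDistance_cast (S T : List α) :
    (editDistance S T : ℝ) = (S.length : ℝ) + T.length - 2 * lcsLen S T := by
  have h : 2 * lcsLen S T ≤ S.length + T.length := by
    have := lcsLen_le_left S T; have := lcsLen_le_right S T; omega
  unfold editDistance
  push_cast [Nat.cast_sub h]
  ring

lemma length_strSlice {S : List α} {i j : ℕ} (hi : 1 ≤ i) (hij : i ≤ j)
    (hj : j ≤ S.length + 1) : (strSlice S i j).length = j - i := by
  simp only [strSlice, List.length_take, List.length_drop]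
  omega

lemma get_strSlice {S : List α} {i j : ℕ} (hi : 1 ≤ i) (hij : i ≤ j)
    (hj : j ≤ S.length + 1) (t : ℕ) (ht : t < j - i) (ht' : i - 1 + t < S.length) :
    (strSlice S i j).get ⟨t, by rw [length_strSlice hi hij hj]; exact ht⟩ =
      S.get ⟨i - 1 + t, ht'⟩ := by
  simp only [strSlice, List.get_eq_getElem, List.getElem_take, List.getElem_drop]


abbrev Str (n q : ℕ) := Fin n → Fin q

def Determines {n q : ℕ} (A : Finset (Str n q)) (T : Finset (Fin n)) : Prop :=
  ∀ f g : Str n q, (∀ v ∈ T, f v = g v) → (f ∈ A ↔ g ∈ A)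

variable {n q : ℕ}

lemma card_inter_mul_card {A B : Finset (Str n q)} {T T' : Finset (Fin n)}
    (hA : Determines A T) (hB : Determines B T') (hTT : Disjoint T T') :
    (A ∩ B).card * Fintype.card (Str n q) = A.card * B.card := by
  classical
  have hswap : ∀ p : Str n q × Str n q,
      (fun p : Str n q × Str n q => (T.piecewise p.1 p.2, T.piecewise p.2 p.1))
      ((fun p : Str n q × Str n q => (T.piecewise p.1 p.2, T.piecewise p.2 p.1)) p) = p := by
    rintro ⟨f, g⟩
    simp only [Prod.mk.injEq]
    constructor <;> (funext v; by_cases hv : v ∈ T <;> simp [Finset.piecewise, hv])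
  have key : ((A ∩ B) ×ˢ (univ : Finset (Str n q))).card = (A ×ˢ B).card := by
    apply Finset.card_nbij'
      (fun p => (T.piecewise p.1 p.2, T.piecewise p.2 p.1))
      (fun p => (T.piecewise p.1 p.2, T.piecewise p.2 p.1))
    · rintro ⟨f, g⟩ hp
      rw [Finset.mem_coe, mem_product] at hp
      obtain ⟨hfAB, -⟩ := hp
      rw [mem_inter] at hfAB
      obtain ⟨hfA, hfB⟩ := hfAB
      rw [Finset.mem_coe, mem_product]
      refine ⟨?_, ?_⟩
      · rw [← hA f (T.piecewise f g) (fun v hv => (T.piecewise_eq_of_mem f g hv).symm)]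
        exact hfA
      · rw [← hB f (T.piecewise g f) (fun v hv =>
          (T.piecewise_eq_of_notMem g f (disjoint_right.mp hTT hv)).symm)]
        exact hfB
    · rintro ⟨f, g⟩ hp
      rw [Finset.mem_coe, mem_product] at hp
      obtain ⟨hfA, hgB⟩ := hp
      rw [Finset.mem_coe, mem_product, mem_inter]
      refine ⟨⟨?_, ?_⟩, mem_univ _⟩
      · rw [← hA f (T.piecewise f g) (fun v hv => (T.piecewise_eq_of_mem f g hv).symm)]
        exact hfA
      · rw [← hB g (T.piecewise f g) (fun v hv =>
          (T.piecewise_eq_of_notMem f g (disjoint_right.mp hTT hv)).symm)]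
        exact hgB
    · intro p _; exact hswap p
    · intro p _; exact hswap p
  rw [card_product, card_product, card_univ] at key
  exact key


variable {I : Type*} [DecidableEq I]

/-- the set of strings avoiding all events in `S` -/
noncomputable def avoid (A : I → Finset (Str n q)) (S : Finset I) : Finset (Str n q) :=
  @Finset.filter _ (fun f => ∀ j ∈ S, f ∉ A j) (Classical.decPred _) Finset.univ

lemma mem_avoid {A : I → Finset (Str n q)} {S : Finset I} {f : Str n q} :
    f ∈ avoid A S ↔ ∀ j ∈ S, f ∉ A j := by
  simp [avoid]

lemma avoid_anti {A : I → Finset (Str n q)} {S S' : Finset I} (h : S ⊆ S') :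
    avoid A S' ⊆ avoid A S := by
  intro f hf
  rw [mem_avoid] at *
  exact fun j hj => hf j (h hj)

lemma determines_avoid {A : I → Finset (Str n q)} {V : I → Finset (Fin n)}
    (hdet : ∀ i, Determines (A i) (V i)) (S : Finset I) :
    Determines (avoid A S) (S.biUnion V) := by
  intro f g hfg
  simp only [mem_avoid]
  refine forall₂_congr (fun j hj => ?_)
  rw [hdet j f g (fun v hv => hfg v (mem_biUnion.mpr ⟨j, hj, hv⟩))]

lemma avoid_insert {A : I → Finset (Str n q)} {S : Finset I} {j : I} :
    avoid A (insert j S) = avoid A S \ A j := by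
  ext f
  simp only [mem_avoid, mem_sdiff, mem_insert]
  constructor
  · intro h
    exact ⟨fun j' hj' => h j' (Or.inr hj'), h j (Or.inl rfl)⟩
  · rintro ⟨h1, h2⟩ j' (rfl | hj')
    · exact h2
    · exact h1 j' hj'

theorem lll (idx : Finset I)
    (A : I → Finset (Str n q)) (V : I → Finset (Fin n)) (x : I → ℝ)
    (hq : 0 < q)
    (hx0 : ∀ i ∈ idx, 0 ≤ x i) (hx1 : ∀ i ∈ idx, x i < 1)
    (hdet : ∀ i, Determines (A i) (V i))
    (hcond : ∀ i ∈ idx, ((A i).card : ℝ) ≤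
      x i * (∏ j ∈ idx.filter (fun j => ¬ Disjoint (V i) (V j)), (1 - x j)) *
        (Fintype.card (Str n q) : ℝ)) :
    ∃ f : Str n q, ∀ i ∈ idx, f ∉ A i := by
  classical
  set Q : ℝ := (Fintype.card (Str n q) : ℝ) with hQ
  have hQpos : 0 < Q := by
    have : Nonempty (Str n q) := ⟨fun _ => ⟨0, hq⟩⟩
    rw [hQ]
    exact_mod_cast Fintype.card_pos
  -- main induction
  have key : ∀ m : ℕ, ∀ S : Finset I, S.card = m → S ⊆ idx → ∀ i ∈ idx, i ∉ S →
      ((A i ∩ avoid A S).card : ℝ) ≤ x i * (avoid A S).card := by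
    intro m
    induction m using Nat.strong_induction_on with
    | _ m IH =>
      intro S hScard hSidx i hiidx hiS
      set S₁ : Finset I := S.filter (fun j => ¬ Disjoint (V i) (V j)) with hS₁
      set S₂ : Finset I := S.filter (fun j => Disjoint (V i) (V j)) with hS₂
      have hS₂S : S₂ ⊆ S := filter_subset _ _
      have hS₁S : S₁ ⊆ S := filter_subset _ _
      -- peeling
      have peel : ∀ T : Finset I, T ⊆ S₁ →
          (∏ j ∈ T, (1 - x j)) * ((avoid A S₂).card : ℝ) ≤ ((avoid A (S₂ ∪ T)).card : ℝ) := by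
        intro T
        induction T using Finset.induction_on with
        | empty => intro _; simp
        | @insert j T hjT ihT =>
          intro hsub
          have hjS₁ : j ∈ S₁ := hsub (mem_insert_self j T)
          have hTsub : T ⊆ S₁ := (subset_insert j T).trans hsub
          have hjidx : j ∈ idx := hSidx (hS₁S hjS₁)
          have hcard : (S₂ ∪ T).card < m := by
            have hsubS : S₂ ∪ T ⊆ S.erase j := by
              intro a ha
              rcases mem_union.mp ha with h2 | hT
              · refine mem_erase.mpr ⟨?_, hS₂S h2⟩
                rintro rfl
                have := (mem_filter.mp h2).2
                have := (mem_filter.mp hjS₁).2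
                exact this ‹Disjoint (V i) (V a)›
              · refine mem_erase.mpr ⟨?_, hS₁S (hTsub hT)⟩
                rintro rfl
                exact hjT hT
            calc (S₂ ∪ T).card ≤ (S.erase j).card := card_le_card hsubS
              _ < S.card := card_erase_lt_of_mem (hS₁S hjS₁)
              _ = m := hScard
          have hjnotin : j ∉ S₂ ∪ T := by
            intro h
            rcases mem_union.mp h with h2 | hT
            · have := (mem_filter.mp h2).2
              exact (mem_filter.mp hjS₁).2 this
            · exact hjT hT
          have hik := IH _ hcard (S₂ ∪ T) rfl
            (union_subset (hS₂S.trans hSidx) ((hTsub.trans hS₁S).trans hSidx)) j hjidx hjnotin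
          -- card of avoid (S₂ ∪ insert j T)
          have hins : S₂ ∪ insert j T = insert j (S₂ ∪ T) := by
            ext a
            simp only [mem_union, mem_insert]
            tauto
          have hsplit : ((avoid A (S₂ ∪ insert j T)).card : ℝ)
              = ((avoid A (S₂ ∪ T)).card : ℝ) - ((A j ∩ avoid A (S₂ ∪ T)).card : ℝ) := by
            rw [hins, avoid_insert]
            have h1 : (avoid A (S₂ ∪ T) ∩ A j).card + (avoid A (S₂ ∪ T) \ A j).card
                = (avoid A (S₂ ∪ T)).card := card_inter_add_card_sdiff _ _
            have : (avoid A (S₂ ∪ T) ∩ A j).card = (A j ∩ avoid A (S₂ ∪ T)).card := by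
              rw [inter_comm]
            push_cast [← h1, this]
            ring
          have hx0j : 0 ≤ 1 - x j := le_of_lt (by linarith [hx1 j hjidx])
          calc (∏ j' ∈ insert j T, (1 - x j')) * ((avoid A S₂).card : ℝ)
              = (1 - x j) * ((∏ j' ∈ T, (1 - x j')) * ((avoid A S₂).card : ℝ)) := by
                rw [prod_insert hjT]; ring
            _ ≤ (1 - x j) * ((avoid A (S₂ ∪ T)).card : ℝ) := by
                apply mul_le_mul_of_nonneg_left (ihT hTsub) hx0j
            _ = ((avoid A (S₂ ∪ T)).card : ℝ) - x j * ((avoid A (S₂ ∪ T)).card : ℝ) := by ring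
            _ ≤ ((avoid A (S₂ ∪ T)).card : ℝ) - ((A j ∩ avoid A (S₂ ∪ T)).card : ℝ) := by
                linarith [hik]
            _ = ((avoid A (S₂ ∪ insert j T)).card : ℝ) := hsplit.symm
      -- independence step
      have hdisj : Disjoint (V i) (S₂.biUnion V) := by
        rw [disjoint_biUnion_right]
        intro j hj
        exact (mem_filter.mp hj).2
      have hindep : ((A i ∩ avoid A S₂).card : ℝ) * Q = ((A i).card : ℝ) * ((avoid A S₂).card : ℝ) := by
        rw [hQ]
        exact_mod_cast card_inter_mul_card (hdet i) (determines_avoid hdet S₂) hdisj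
      -- product comparison
      have hprodle : (∏ j ∈ idx.filter (fun j => ¬ Disjoint (V i) (V j)), (1 - x j))
          ≤ ∏ j ∈ S₁, (1 - x j) := by
        have hsub : S₁ ⊆ idx.filter (fun j => ¬ Disjoint (V i) (V j)) := by
          intro a ha
          exact mem_filter.mpr ⟨hSidx (hS₁S ha), (mem_filter.mp ha).2⟩
        rw [← prod_sdiff hsub]
        have h1 : ∏ j ∈ idx.filter (fun j => ¬ Disjoint (V i) (V j)) \ S₁, (1 - x j) ≤ 1 := by
          apply prod_le_one
          · intro a ha
            have := hx1 a (mem_filter.mp (mem_sdiff.mp ha).1).1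
            linarith
          · intro a ha
            have := hx0 a (mem_filter.mp (mem_sdiff.mp ha).1).1
            linarith
        have h2 : 0 ≤ ∏ j ∈ S₁, (1 - x j) := by
          apply prod_nonneg
          intro a ha
          have := hx1 a (hSidx (hS₁S ha))
          linarith
        nlinarith
      have hS₂card : (0:ℝ) ≤ ((avoid A S₂).card : ℝ) := Nat.cast_nonneg _
      have hstep1 : ((A i ∩ avoid A S₂).card : ℝ)
          ≤ x i * (∏ j ∈ S₁, (1 - x j)) * ((avoid A S₂).card : ℝ) := by
        have h := hcond i hiidx
        have hmul : ((A i ∩ avoid A S₂).card : ℝ) * Q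
            ≤ (x i * (∏ j ∈ S₁, (1 - x j)) * ((avoid A S₂).card : ℝ)) * Q := by
          rw [hindep]
          calc ((A i).card : ℝ) * ((avoid A S₂).card : ℝ)
              ≤ (x i * (∏ j ∈ idx.filter (fun j => ¬ Disjoint (V i) (V j)), (1 - x j)) * Q)
                * ((avoid A S₂).card : ℝ) := by
                apply mul_le_mul_of_nonneg_right h hS₂card
            _ ≤ (x i * (∏ j ∈ S₁, (1 - x j)) * ((avoid A S₂).card : ℝ)) * Q := by
                have hm := mul_le_mul_of_nonneg_right
                  (mul_le_mul_of_nonneg_left hprodle (hx0 i hiidx))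
                  (mul_nonneg hQpos.le hS₂card)
                calc (x i * (∏ j ∈ idx.filter (fun j => ¬ Disjoint (V i) (V j)), (1 - x j)) * Q)
                    * ((avoid A S₂).card : ℝ)
                    = (x i * ∏ j ∈ idx.filter (fun j => ¬ Disjoint (V i) (V j)), (1 - x j))
                      * (Q * ((avoid A S₂).card : ℝ)) := by ring
                  _ ≤ (x i * ∏ j ∈ S₁, (1 - x j)) * (Q * ((avoid A S₂).card : ℝ)) := hm
                  _ = (x i * (∏ j ∈ S₁, (1 - x j)) * ((avoid A S₂).card : ℝ)) * Q := by ring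
        exact le_of_mul_le_mul_right hmul hQpos
      have hSS : S₂ ∪ S₁ = S := by
        ext a
        simp only [hS₁, hS₂, mem_union, mem_filter]
        by_cases hd : Disjoint (V i) (V a) <;> tauto
      calc ((A i ∩ avoid A S).card : ℝ)
          ≤ ((A i ∩ avoid A S₂).card : ℝ) := by
            exact_mod_cast card_le_card (inter_subset_inter (Finset.Subset.refl _) (avoid_anti hS₂S))
        _ ≤ x i * (∏ j ∈ S₁, (1 - x j)) * ((avoid A S₂).card : ℝ) := hstep1
        _ = x i * ((∏ j ∈ S₁, (1 - x j)) * ((avoid A S₂).card : ℝ)) := by ring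
        _ ≤ x i * ((avoid A (S₂ ∪ S₁)).card : ℝ) := by
            apply mul_le_mul_of_nonneg_left (peel S₁ (le_refl _)) (hx0 i hiidx)
        _ = x i * ((avoid A S).card : ℝ) := by rw [hSS]
  -- lower bound on avoid idx
  have final : ∀ S : Finset I, S ⊆ idx →
      (∏ j ∈ S, (1 - x j)) * Q ≤ ((avoid A S).card : ℝ) := by
    intro S
    induction S using Finset.induction_on with
    | empty =>
      intro _
      simp only [prod_empty, one_mul]
      have : avoid A (∅ : Finset I) = univ := by
        ext f; simp [mem_avoid]
      rw [this, hQ, card_univ]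
    | @insert j T hjT ihT =>
      intro hsub
      have hjidx : j ∈ idx := hsub (mem_insert_self j T)
      have hTsub : T ⊆ idx := (subset_insert j T).trans hsub
      have hik := key T.card T rfl hTsub j hjidx hjT
      have hsplit : ((avoid A (insert j T)).card : ℝ)
          = ((avoid A T).card : ℝ) - ((A j ∩ avoid A T).card : ℝ) := by
        rw [avoid_insert]
        have h1 : (avoid A T ∩ A j).card + (avoid A T \ A j).card
            = (avoid A T).card := card_inter_add_card_sdiff _ _
        have h2 : (avoid A T ∩ A j).card = (A j ∩ avoid A T).card := by rw [inter_comm]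
        push_cast [← h1, h2]
        ring
      have hx0j : 0 ≤ 1 - x j := le_of_lt (by linarith [hx1 j hjidx])
      calc (∏ j' ∈ insert j T, (1 - x j')) * Q
          = (1 - x j) * ((∏ j' ∈ T, (1 - x j')) * Q) := by rw [prod_insert hjT]; ring
        _ ≤ (1 - x j) * ((avoid A T).card : ℝ) := mul_le_mul_of_nonneg_left (ihT hTsub) hx0j
        _ = ((avoid A T).card : ℝ) - x j * ((avoid A T).card : ℝ) := by ring
        _ ≤ ((avoid A T).card : ℝ) - ((A j ∩ avoid A T).card : ℝ) := by linarith [hik]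
        _ = ((avoid A (insert j T)).card : ℝ) := hsplit.symm
  have hpos : (0:ℝ) < ((avoid A idx).card : ℝ) := by
    have h1 : (0:ℝ) < (∏ j ∈ idx, (1 - x j)) * Q := by
      apply mul_pos _ hQpos
      apply prod_pos
      intro j hj
      linarith [hx1 j hj]
    linarith [final idx (le_refl _)]
  have : (avoid A idx).Nonempty := by
    rw [← card_pos]
    exact_mod_cast hpos
  obtain ⟨f, hf⟩ := this
  exact ⟨f, mem_avoid.mp hf⟩


/-- An event index: a pair of finsets `(X, Y)` (the matched positions). -/
abbrev EvIdx (n : ℕ) := Finset (Fin n) × Finset (Fin n)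

/-- A valid event: `X` nonempty, `|X| = |Y|`, all of `X` before all of `Y`,
and the span is less than `2|X|/ε`. -/
def goodPair (ε : ℝ) (p : EvIdx n) : Prop :=
  p.1.Nonempty ∧ p.1.card = p.2.card ∧
  (∀ a ∈ p.1, ∀ b ∈ p.2, (a : ℕ) < (b : ℕ)) ∧
  (∀ a ∈ p.1, ∀ b ∈ p.2, ε * (((b : ℕ) : ℝ) - ((a : ℕ) : ℝ)) < 2 * p.1.card)

/-- The event: the increasing enumerations of `X` and `Y` get matched values. -/
def Matches (p : EvIdx n) (f : Str n q) : Prop :=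
  ∀ t₁ : Fin p.1.card, ∀ t₂ : Fin p.2.card, (t₁ : ℕ) = (t₂ : ℕ) →
    f (p.1.orderEmbOfFin rfl t₁) = f (p.2.orderEmbOfFin rfl t₂)

noncomputable def event (p : EvIdx n) : Finset (Str n q) :=
  @Finset.filter _ (fun f => Matches p f) (Classical.decPred _) Finset.univ

lemma mem_event {p : EvIdx n} {f : Str n q} : f ∈ (event p : Finset (Str n q)) ↔ Matches p f := by
  simp [event]

lemma determines_event (p : EvIdx n) :
    Determines (event p : Finset (Str n q)) (p.1 ∪ p.2) := by
  intro f g hfg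
  simp only [mem_event]
  constructor <;> intro hm t₁ t₂ ht
  · rw [← hfg _ (mem_union_left _ (orderEmbOfFin_mem _ _ _)),
      ← hfg _ (mem_union_right _ (orderEmbOfFin_mem _ _ _))]
    exact hm t₁ t₂ ht
  · rw [hfg _ (mem_union_left _ (orderEmbOfFin_mem _ _ _)),
      hfg _ (mem_union_right _ (orderEmbOfFin_mem _ _ _))]
    exact hm t₁ t₂ ht

lemma disjoint_of_lt {p : EvIdx n} (hlt : ∀ a ∈ p.1, ∀ b ∈ p.2, (a : ℕ) < (b : ℕ)) :
    Disjoint p.1 p.2 := by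
  rw [disjoint_left]
  intro a ha ha2
  exact lt_irrefl _ (hlt a ha a ha2)

lemma card_event_le (p : EvIdx n) (hcard : p.1.card = p.2.card)
    (hlt : ∀ a ∈ p.1, ∀ b ∈ p.2, (a : ℕ) < (b : ℕ)) :
    (event p : Finset (Str n q)).card ≤ q ^ (n - p.1.card) := by
  classical
  have hdisj : Disjoint p.1 p.2 := disjoint_of_lt hlt
  set Yc : Finset (Fin n) := (univ : Finset (Fin n)) \ p.2 with hYc
  have hXsub : p.1 ⊆ Yc := by
    intro a ha
    simp only [hYc, mem_sdiff, mem_univ, true_and]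
    exact disjoint_left.mp hdisj ha
  have hinj : Set.InjOn (fun f : Str n q => (fun u : ↥Yc => f u))
      ((event p : Finset (Str n q)) : Set (Str n q)) := by
    intro f₁ hf₁ f₂ hf₂ heq
    simp only [Finset.coe_filter, Set.mem_setOf_eq, mem_coe, mem_event] at hf₁ hf₂
    have hf₁' : Matches p f₁ := hf₁
    have hf₂' : Matches p f₂ := hf₂
    funext v
    by_cases hv : v ∈ p.2
    · -- v = orderEmbOfFin of p.2 at some t₂
      have : v ∈ Set.range (p.2.orderEmbOfFin rfl) := by
        rw [range_orderEmbOfFin]; exact hv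
      obtain ⟨t₂, ht₂⟩ := this
      have hXY : ∀ t : Fin p.1.card, (p.1.orderEmbOfFin rfl t : Fin n) ∈ Yc :=
        fun t => hXsub (orderEmbOfFin_mem _ _ _)
      set t₁ : Fin p.1.card := Fin.cast hcard.symm t₂ with ht₁def
      have hval : (t₁ : ℕ) = (t₂ : ℕ) := rfl
      have h1 := hf₁' t₁ t₂ hval
      have h2 := hf₂' t₁ t₂ hval
      have hX12 : f₁ (p.1.orderEmbOfFin rfl t₁) = f₂ (p.1.orderEmbOfFin rfl t₁) :=
        congrFun heq ⟨_, hXY t₁⟩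
      rw [← ht₂, ← h1, ← h2, hX12]
    · have : v ∈ Yc := by simp [hYc, hv]
      exact congrFun heq ⟨v, this⟩
  have hle := Finset.card_le_card_of_injOn (fun f : Str n q => (fun u : ↥Yc => f u))
    (fun f _ => Finset.mem_univ _) hinj
  calc (event p : Finset (Str n q)).card
      ≤ (univ : Finset (↥Yc → Fin q)).card := hle
    _ = q ^ (n - p.1.card) := by
        rw [card_univ]
        rw [Fintype.card_fun]
        congr 1
        · exact Fintype.card_fin q
        · rw [Fintype.card_coe]
          simp only [hYc]
          rw [card_sdiff_of_subset (subset_univ _), card_univ, Fintype.card_fin, hcard]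


noncomputable def evIdxSet (n : ℕ) (ε : ℝ) : Finset (EvIdx n) :=
  @Finset.filter _ (goodPair ε) (Classical.decPred _) (univ : Finset (EvIdx n))

lemma mem_evIdxSet {n : ℕ} {ε : ℝ} {p : EvIdx n} : p ∈ evIdxSet n ε ↔ goodPair ε p := by
  simp [evIdxSet]

/-- `X` is recoverable from `X ∪ Y` and `|X|` as the set of elements with fewer than
`|X|` predecessors. -/
lemma fst_recover {ε : ℝ} {p : EvIdx n} (hp : goodPair ε p) :
    p.1 = (p.1 ∪ p.2).filter
      (fun u => ((p.1 ∪ p.2).filter (fun w => w < u)).card < p.1.card) := by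
  classical
  obtain ⟨hne, hcard, hlt, _⟩ := hp
  ext u
  simp only [mem_filter, mem_union]
  constructor
  · intro hu
    refine ⟨Or.inl hu, ?_⟩
    have hsub : (p.1 ∪ p.2).filter (fun w => w < u) ⊆ p.1.erase u := by
      intro w hw
      obtain ⟨hw1, hw2⟩ := mem_filter.mp hw
      rcases mem_union.mp hw1 with h1 | h2
      · exact mem_erase.mpr ⟨ne_of_lt hw2, h1⟩
      · exact absurd (hlt u hu w h2) (by have := Fin.lt_def.mp hw2; omega)
    calc ((p.1 ∪ p.2).filter (fun w => w < u)).card ≤ (p.1.erase u).card :=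
          card_le_card hsub
      _ < p.1.card := card_erase_lt_of_mem hu
  · rintro ⟨hu, hcount⟩
    rcases hu with h1 | h2
    · exact h1
    · exfalso
      have hsub : p.1 ⊆ (p.1 ∪ p.2).filter (fun w => w < u) := by
        intro a ha
        refine mem_filter.mpr ⟨mem_union_left _ ha, ?_⟩
        have := hlt a ha u h2
        exact Fin.lt_def.mpr this
      have := card_le_card hsub
      omega
  
lemma window_bound {ε : ℝ} (hε0 : 0 < ε) {p : EvIdx n} (hp : goodPair ε p)
    {u w : Fin n} (hu : u ∈ p.1 ∪ p.2) (hw : w ∈ p.1 ∪ p.2) :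
    (u : ℕ) ≤ (w : ℕ) + ⌈(2 * p.1.card : ℝ) / ε⌉₊ := by
  obtain ⟨hne, hcard, hlt, hspan⟩ := hp
  set D := ⌈(2 * p.1.card : ℝ) / ε⌉₊ with hD
  have cross : ∀ a ∈ p.1, ∀ b ∈ p.2, (b : ℕ) ≤ (a : ℕ) + D := by
    intro a ha b hb
    have h1 := hspan a ha b hb
    have h2 : ((b : ℕ) : ℝ) - ((a : ℕ) : ℝ) < (2 * p.1.card : ℝ) / ε := by
      rw [lt_div_iff₀ hε0]
      nlinarith [hspan a ha b hb]
    have h3 : ((b : ℕ) : ℝ) < ((a : ℕ) : ℝ) + D := by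
      have := Nat.le_ceil ((2 * p.1.card : ℝ) / ε)
      calc ((b : ℕ) : ℝ) < ((a : ℕ) : ℝ) + (2 * p.1.card : ℝ) / ε := by linarith
        _ ≤ ((a : ℕ) : ℝ) + D := by rw [hD]; push_cast; linarith [this]
    exact_mod_cast le_of_lt h3
  have hne2 : p.2.Nonempty := by
    rw [← card_pos, ← hcard, card_pos]; exact hne
  rcases mem_union.mp hu with hu1 | hu2 <;> rcases mem_union.mp hw with hw1 | hw2
  · obtain ⟨b, hb⟩ := hne2
    have h1 := hlt u hu1 b hb
    have h2 := cross w hw1 b hb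
    omega
  · have := hlt u hu1 w hw2
    omega
  · exact cross w hw1 u hu2
  · obtain ⟨a, ha⟩ := hne
    have h1 := cross a ha u hu2
    have h2 := hlt a ha w hw2
    omega

lemma count_fiber {ε : ℝ} (hε0 : 0 < ε) (v : Fin n) (m : ℕ) (hm : 1 ≤ m) :
    ((evIdxSet n ε).filter
      (fun p => v ∈ p.1 ∪ p.2 ∧ p.1.card = m)).card
      ≤ (2 * ⌈(2 * m : ℝ) / ε⌉₊).choose (2 * m - 1) := by
  classical
  set D := ⌈(2 * m : ℝ) / ε⌉₊ with hD
  set W : Finset (Fin n) :=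
    univ.filter (fun u => u ≠ v ∧ (u : ℕ) ≤ (v : ℕ) + D ∧ (v : ℕ) ≤ (u : ℕ) + D) with hW
  have hWcard : W.card ≤ 2 * D := by
    have hinj : Set.InjOn (fun u : Fin n => (u : ℕ)) (W : Set (Fin n)) :=
      fun a _ b _ h => Fin.ext h
    have hmaps : ∀ u ∈ W, (u : ℕ) ∈ (Finset.Icc ((v : ℕ) - D) ((v : ℕ) + D)).erase (v : ℕ) := by
      intro u hu
      obtain ⟨-, hne, h1, h2⟩ := mem_filter.mp hu
      refine mem_erase.mpr ⟨fun h => hne (Fin.ext h), ?_⟩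
      rw [Finset.mem_Icc]
      omega
    have hle := Finset.card_le_card_of_injOn _ hmaps hinj
    have hIcc : ((Finset.Icc ((v : ℕ) - D) ((v : ℕ) + D)).erase (v : ℕ)).card ≤ 2 * D := by
      have hvmem : (v : ℕ) ∈ Finset.Icc ((v : ℕ) - D) ((v : ℕ) + D) := by
        rw [Finset.mem_Icc]; omega
      rw [card_erase_of_mem hvmem, Nat.card_Icc]
      omega
    omega
  -- injection into powersetCard (2m-1) W
  have hmaps2 : ∀ p ∈ (evIdxSet n ε).filter (fun p => v ∈ p.1 ∪ p.2 ∧ p.1.card = m),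
      (p.1 ∪ p.2).erase v ∈ Finset.powersetCard (2 * m - 1) W := by
    intro p hp
    have h' := mem_filter.mp hp
    have hp1 : goodPair ε p := mem_evIdxSet.mp h'.1
    have hvmem : v ∈ p.1 ∪ p.2 := h'.2.1
    have hpcard : p.1.card = m := h'.2.2
    obtain ⟨hne, hcard, hlt, hspan⟩ := hp1
    rw [Finset.mem_powersetCard]
    constructor
    · intro u hu
      obtain ⟨hune, humem⟩ := mem_erase.mp hu
      rw [hW, mem_filter]
      have hb1 := window_bound hε0 ⟨hne, hcard, hlt, hspan⟩ humem hvmem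
      have hb2 := window_bound hε0 ⟨hne, hcard, hlt, hspan⟩ hvmem humem
      rw [hpcard] at hb1 hb2
      exact ⟨mem_univ _, hune, hb1, hb2⟩
    · have hdisj := disjoint_of_lt hlt
      rw [card_erase_of_mem hvmem, card_union_of_disjoint hdisj, ← hcard, hpcard]
      omega
  have hinj2 : Set.InjOn (fun p : EvIdx n => (p.1 ∪ p.2).erase v)
      ((((evIdxSet n ε).filter
          (fun p => v ∈ p.1 ∪ p.2 ∧ p.1.card = m)) : Finset (EvIdx n)) : Set (EvIdx n)) := by
    intro p hp p' hp' heq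
    simp only [mem_coe, mem_filter] at hp hp'
    have hpg : goodPair ε p := mem_evIdxSet.mp hp.1
    have hvmem : v ∈ p.1 ∪ p.2 := hp.2.1
    have hpcard : p.1.card = m := hp.2.2
    have hpg' : goodPair ε p' := mem_evIdxSet.mp hp'.1
    have hvmem' : v ∈ p'.1 ∪ p'.2 := hp'.2.1
    have hpcard' : p'.1.card = m := hp'.2.2
    have heq' : (p.1 ∪ p.2).erase v = (p'.1 ∪ p'.2).erase v := heq
    have hunion : p.1 ∪ p.2 = p'.1 ∪ p'.2 := by
      rw [← insert_erase hvmem, ← insert_erase hvmem', heq']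
    have hfst : p.1 = p'.1 := by
      rw [fst_recover hpg, fst_recover hpg', hunion, hpcard, hpcard']
    have hsnd : p.2 = p'.2 := by
      have h1 : (p.1 ∪ p.2) \ p.1 = p.2 := union_sdiff_cancel_left (disjoint_of_lt hpg.2.2.1)
      have h2 : (p'.1 ∪ p'.2) \ p'.1 = p'.2 := union_sdiff_cancel_left (disjoint_of_lt hpg'.2.2.1)
      rw [← h1, ← h2, hunion, hfst]
    exact Prod.ext hfst hsnd
  have hle2 := Finset.card_le_card_of_injOn _ hmaps2 hinj2
  calc _ ≤ (Finset.powersetCard (2 * m - 1) W).card := hle2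
    _ = W.card.choose (2 * m - 1) := card_powersetCard _ _
    _ ≤ (2 * D).choose (2 * m - 1) := Nat.choose_le_choose _ hWcard


lemma pow_self_le_three_pow_mul_factorial : ∀ t : ℕ, (t : ℝ) ^ t ≤ 3 ^ t * (t.factorial : ℝ) := by
  intro t
  induction t with
  | zero => simp
  | succ t ih =>
    have key : ((t + 1 : ℕ) : ℝ) ^ t ≤ 3 * (t : ℝ) ^ t := by
      rcases Nat.eq_zero_or_pos t with rfl | ht
      · norm_num
      · have htpos : (0 : ℝ) < t := by exact_mod_cast ht
        have h1 : ((t + 1 : ℕ) : ℝ) = (t : ℝ) * (1 + 1 / t) := by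
          field_simp
          push_cast; ring
        rw [h1, mul_pow]
        have h2 : (1 + 1 / (t : ℝ)) ^ t ≤ 3 := by
          have h3 : (1 + 1 / (t : ℝ)) ≤ Real.exp (1 / t) := by
            have := Real.add_one_le_exp (1 / (t : ℝ))
            linarith
          have h4 : (1 + 1 / (t : ℝ)) ^ t ≤ Real.exp (1 / t) ^ t := by
            apply pow_le_pow_left₀ (by positivity) h3
          have h5 : Real.exp (1 / (t : ℝ)) ^ t = Real.exp ((1 / t) * t) := by
            rw [← Real.exp_nat_mul]; ring_nf
          have h6 : (1 / (t : ℝ)) * t = 1 := by field_simp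
          rw [h5, h6] at h4
          have h7 : Real.exp 1 ≤ 3 := by
            have := Real.exp_one_lt_d9
            linarith
          linarith
        have h8 : (0 : ℝ) ≤ (t : ℝ) ^ t := by positivity
        nlinarith
    have h9 : ((t + 1 : ℕ) : ℝ) ^ (t + 1) = ((t + 1 : ℕ) : ℝ) * ((t + 1 : ℕ) : ℝ) ^ t := by ring
    have h10 : (0 : ℝ) ≤ ((t + 1 : ℕ) : ℝ) := by positivity
    calc ((t + 1 : ℕ) : ℝ) ^ (t + 1) = ((t + 1 : ℕ) : ℝ) * ((t + 1 : ℕ) : ℝ) ^ t := h9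
      _ ≤ ((t + 1 : ℕ) : ℝ) * (3 * (t : ℝ) ^ t) := by
          apply mul_le_mul_of_nonneg_left key h10
      _ ≤ ((t + 1 : ℕ) : ℝ) * (3 * (3 ^ t * (t.factorial : ℝ))) := by
          have h11 : (0 : ℝ) ≤ 3 := by norm_num
          apply mul_le_mul_of_nonneg_left _ h10
          apply mul_le_mul_of_nonneg_left ih h11
      _ = 3 ^ (t + 1) * (((t + 1) * t.factorial : ℕ) : ℝ) := by push_cast; ring
      _ = 3 ^ (t + 1) * ((t + 1).factorial : ℝ) := by rw [Nat.factorial_succ]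

lemma choose_window_bound {ε : ℝ} (hε0 : 0 < ε) (hε1 : ε < 1) (m : ℕ) (hm : 1 ≤ m) :
    (((2 * ⌈(2 * m : ℝ) / ε⌉₊).choose (2 * m - 1) : ℕ) : ℝ) ≤ (18 / ε) ^ (2 * m - 1) := by
  set D := ⌈(2 * m : ℝ) / ε⌉₊ with hD
  set t := 2 * m - 1 with ht
  have htpos : 1 ≤ t := by omega
  have hDle : (D : ℝ) ≤ 3 * m / ε := by
    have h1 : (D : ℝ) < (2 * m : ℝ) / ε + 1 := Nat.ceil_lt_add_one (by positivity)
    have h2 : (1 : ℝ) ≤ (m : ℝ) / ε := by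
      rw [le_div_iff₀ hε0]
      have : (1 : ℝ) ≤ (m : ℝ) := by exact_mod_cast hm
      nlinarith
    have : (2 * m : ℝ) / ε + 1 ≤ 3 * m / ε := by
      have h3 : (2 * m : ℝ) / ε + (m : ℝ) / ε = 3 * m / ε := by ring
      linarith
    linarith
  have h6D : (6 * D : ℝ) ≤ (18 / ε) * t := by
    have h1 : (m : ℝ) ≤ (t : ℝ) := by
      rw [ht]; push_cast [Nat.cast_sub (by omega : 1 ≤ 2 * m)]
      have : (1 : ℝ) ≤ (m : ℝ) := by exact_mod_cast hm
      linarith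
    calc (6 * D : ℝ) ≤ 6 * (3 * m / ε) := by linarith
      _ = (18 / ε) * m := by ring
      _ ≤ (18 / ε) * t := by
          apply mul_le_mul_of_nonneg_left h1 (by positivity)
  have hchoose : (((2 * D).choose t : ℕ) : ℝ) ≤ ((2 * D : ℕ) : ℝ) ^ t / (t.factorial : ℝ) :=
    Nat.choose_le_pow_div t (2 * D)
  have hfact : ((t : ℝ) ^ t / 3 ^ t) ≤ (t.factorial : ℝ) := by
    rw [div_le_iff₀ (by positivity)]
    calc (t : ℝ) ^ t ≤ 3 ^ t * (t.factorial : ℝ) := pow_self_le_three_pow_mul_factorial t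
      _ = (t.factorial : ℝ) * 3 ^ t := by ring
  have htR : (0 : ℝ) < (t : ℝ) := by exact_mod_cast htpos
  have hfactpos : (0 : ℝ) < (t.factorial : ℝ) := by exact_mod_cast t.factorial_pos
  calc (((2 * D).choose t : ℕ) : ℝ) ≤ ((2 * D : ℕ) : ℝ) ^ t / (t.factorial : ℝ) := hchoose
    _ ≤ ((2 * D : ℕ) : ℝ) ^ t / ((t : ℝ) ^ t / 3 ^ t) := by
        apply div_le_div_of_nonneg_left (by positivity) (by positivity) hfact
    _ = ((2 * D : ℝ) * 3 / t) ^ t := by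
        push_cast
        rw [div_div_eq_mul_div, div_pow, mul_pow, mul_pow]
        ring_nf
    _ ≤ (18 / ε) ^ t := by
        apply pow_le_pow_left₀ (by positivity)
        rw [div_le_iff₀ htR]
        linarith [h6D]

lemma geom_quarter_sum (M : ℕ) {r : ℝ} (hr0 : 0 ≤ r) (hr : r ≤ 1 / 4) :
    ∑ m ∈ Finset.Icc 1 M, r ^ m ≤ 1 / 3 := by
  have key : ∀ M : ℕ, ∑ m ∈ Finset.Icc 1 M, r ^ m ≤ 1 / 3 - (1 / 3) * r ^ M := by
    intro M
    induction M with
    | zero => simp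
    | succ M ih =>
      rw [← Finset.insert_Icc_right_eq_Icc_add_one (by omega : 1 ≤ M + 1)]
      rw [Finset.sum_insert (by simp)]
      have hrM : r ^ M ≥ 0 := by positivity
      have h1 : r ^ (M + 1) ≤ (1/4) * r ^ M := by
        rw [pow_succ]
        calc r ^ M * r ≤ r ^ M * (1/4) := by
              apply mul_le_mul_of_nonneg_left hr hrM
          _ = (1/4) * r ^ M := by ring
      have h2 : r ^ (M + 1) ≥ 0 := by positivity
      calc r ^ (M + 1) + ∑ m ∈ Finset.Icc 1 M, r ^ m
          ≤ (1/4) * r ^ M + (1 / 3 - (1 / 3) * r ^ M) := by linarith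
        _ ≤ 1 / 3 - (1 / 3) * r ^ (M + 1) := by nlinarith
  calc ∑ m ∈ Finset.Icc 1 M, r ^ m ≤ 1 / 3 - (1 / 3) * r ^ M := key M
    _ ≤ 1 / 3 := by
        have := pow_nonneg hr0 M
        linarith

lemma weierstrass {I : Type*} (s : Finset I) (g : I → ℝ)
    (h0 : ∀ i ∈ s, 0 ≤ g i) (h1 : ∀ i ∈ s, g i ≤ 1) :
    1 - ∑ i ∈ s, g i ≤ ∏ i ∈ s, (1 - g i) := by
  classical
  induction s using Finset.induction_on with
  | empty => simp
  | @insert j T hjT ih =>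
    rw [Finset.sum_insert hjT, Finset.prod_insert hjT]
    have ihT := ih (fun i hi => h0 i (mem_insert_of_mem hi)) (fun i hi => h1 i (mem_insert_of_mem hi))
    have hj0 := h0 j (mem_insert_self j T)
    have hj1 := h1 j (mem_insert_self j T)
    have hsum0 : 0 ≤ ∑ i ∈ T, g i := Finset.sum_nonneg (fun i hi => h0 i (mem_insert_of_mem hi))
    nlinarith [mul_le_mul_of_nonneg_left ihT (by linarith : (0:ℝ) ≤ 1 - g j)]

lemma prod_union_ge {I : Type*} [DecidableEq I] (a b : Finset I) (g : I → ℝ)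
    (h0 : ∀ i, 0 ≤ g i) (h1 : ∀ i, g i ≤ 1) :
    (∏ i ∈ a, g i) * ∏ i ∈ b, g i ≤ ∏ i ∈ a ∪ b, g i := by
  have hab : a ∪ b = a ∪ (b \ a) := by rw [union_sdiff_self_eq_union]
  rw [hab, prod_union disjoint_sdiff]
  have hb : ∏ i ∈ b, g i ≤ ∏ i ∈ b \ a, g i := by
    have hsplit : ∏ i ∈ b, g i = (∏ i ∈ b \ a, g i) * ∏ i ∈ b ∩ a, g i := by
      rw [← prod_union (disjoint_sdiff_inter b a), sdiff_union_inter]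
    rw [hsplit]
    have h2 : ∏ i ∈ b ∩ a, g i ≤ 1 := prod_le_one (fun i _ => h0 i) (fun i _ => h1 i)
    have h3 : 0 ≤ ∏ i ∈ b \ a, g i := prod_nonneg (fun i _ => h0 i)
    nlinarith
  have ha : 0 ≤ ∏ i ∈ a, g i := prod_nonneg (fun i _ => h0 i)
  exact mul_le_mul_of_nonneg_left hb ha

lemma prod_biUnion_ge {I β : Type*} [DecidableEq I] (s : Finset β) (t : β → Finset I) (g : I → ℝ)
    (h0 : ∀ i, 0 ≤ g i) (h1 : ∀ i, g i ≤ 1) :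
    ∏ v ∈ s, ∏ i ∈ t v, g i ≤ ∏ i ∈ s.biUnion t, g i := by
  classical
  induction s using Finset.induction_on with
  | empty => simp
  | @insert v s hvs ih =>
    rw [Finset.prod_insert hvs, Finset.biUnion_insert]
    calc (∏ i ∈ t v, g i) * ∏ w ∈ s, ∏ i ∈ t w, g i
        ≤ (∏ i ∈ t v, g i) * ∏ i ∈ s.biUnion t, g i := by
          apply mul_le_mul_of_nonneg_left ih (prod_nonneg (fun i _ => h0 i))
      _ ≤ ∏ i ∈ t v ∪ s.biUnion t, g i := prod_union_ge _ _ g h0 h1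


lemma reduction {n q : ℕ} {ε : ℝ} (hε0 : 0 < ε) (f : Str n q)
    (hav : ∀ p : EvIdx n, goodPair ε p → ¬ Matches p f) :
    IsSyncString ε (List.ofFn f) := by
  classical
  intro i j k h1i hij hjk hk
  set S : List (Fin q) := List.ofFn f with hS
  have hSlen : S.length = n := List.length_ofFn
  rw [hSlen] at hk
  by_contra hcon
  push_neg at hcon
  -- basic numeric facts
  have hjn : j ≤ n := by omega
  have hkn : k - 1 ≤ n := by omega
  set A := strSlice S i j with hA
  set B := strSlice S j k with hB
  have hAlen : A.length = j - i := length_strSlice h1i (le_of_lt hij) (by omega)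
  have hBlen : B.length = k - j := length_strSlice (by omega) (le_of_lt hjk) (by omega)
  set L := lcsLen A B with hL
  set l := k - i with hl
  have hlcast : ((k : ℝ) - (i : ℝ)) = (l : ℝ) := by
    rw [hl]; push_cast [Nat.cast_sub (by omega : i ≤ k)]; ring
  have hED : (editDistance A B : ℝ) = (l : ℝ) - 2 * L := by
    rw [editDistance_cast, hAlen, hBlen]
    have : ((j : ℕ) - i : ℕ) + ((k : ℕ) - j : ℕ) = l := by omega
    push_cast [Nat.cast_sub (le_of_lt hij), Nat.cast_sub (le_of_lt hjk), hl,
      Nat.cast_sub (by omega : i ≤ k)]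
    ring
  have hεL : ε * l ≤ 2 * L := by
    rw [hED, hlcast] at hcon
    nlinarith
  set m := ⌈ε * l / 2⌉₊ with hm
  have hlpos : (0 : ℝ) < l := by
    have : 2 ≤ l := by omega
    exact_mod_cast by omega
  have hm1 : 1 ≤ m := by
    rw [hm]
    exact Nat.one_le_iff_ne_zero.mpr (by
      intro h
      have := Nat.ceil_eq_zero.mp h
      nlinarith)
  have hmL : m ≤ L := by
    rw [hm, Nat.ceil_le]
    have : (0:ℝ) ≤ L := Nat.cast_nonneg _
    nlinarith
  have hεl2m : ε * l ≤ 2 * m := by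
    have := Nat.le_ceil (ε * l / 2)
    rw [← hm] at this
    linarith
  obtain ⟨U, hUlen, hUA, hUB⟩ := exists_lcs A B
  set U' := U.take m with hU'
  have hU'len : U'.length = m := by
    rw [hU', List.length_take, hUlen, ← hL]
    omega
  have hU'A : U'.Sublist A := (List.take_sublist m U).trans hUA
  have hU'B : U'.Sublist B := (List.take_sublist m U).trans hUB
  obtain ⟨φ, hφ⟩ := List.sublist_iff_exists_fin_orderEmbedding_get_eq.mp hU'A
  obtain ⟨ψ, hψ⟩ := List.sublist_iff_exists_fin_orderEmbedding_get_eq.mp hU'B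
  -- index casts
  have hcastm : ∀ t : Fin m, (Fin.cast hU'len.symm t : Fin U'.length) = ⟨(t : ℕ), by
    rw [hU'len]; exact t.isLt⟩ := fun t => rfl
  set t' : Fin m → Fin U'.length := fun t => Fin.cast hU'len.symm t with ht'
  have hφlt : ∀ t : Fin m, (φ (t' t) : ℕ) < j - i := by
    intro t
    have hv := (φ (t' t)).isLt
    omega
  have hψlt : ∀ t : Fin m, (ψ (t' t) : ℕ) < k - j := by
    intro t
    have hv := (ψ (t' t)).isLt
    omega
  -- position maps
  have hxbound : ∀ t : Fin m, i - 1 + (φ (t' t) : ℕ) < n := by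
    intro t; have := hφlt t; omega
  have hybound : ∀ t : Fin m, j - 1 + (ψ (t' t) : ℕ) < n := by
    intro t; have := hψlt t; omega
  set xfin : Fin m → Fin n := fun t => ⟨i - 1 + (φ (t' t) : ℕ), hxbound t⟩ with hxfin
  set yfin : Fin m → Fin n := fun t => ⟨j - 1 + (ψ (t' t) : ℕ), hybound t⟩ with hyfin
  have ht'mono : ∀ {a b : Fin m}, a < b → t' a < t' b := by
    intro a b hab
    rw [Fin.lt_def] at *
    exact hab
  have hxmono : StrictMono xfin := by
    intro a b hab
    rw [hxfin, Fin.lt_def]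
    have := φ.strictMono (ht'mono hab)
    rw [Fin.lt_def] at this
    simp only []
    omega
  have hymono : StrictMono yfin := by
    intro a b hab
    rw [hyfin, Fin.lt_def]
    have := ψ.strictMono (ht'mono hab)
    rw [Fin.lt_def] at this
    simp only []
    omega
  -- the value equation
  have hval : ∀ t : Fin m, f (xfin t) = f (yfin t) := by
    intro t
    have h1 := hφ (t' t)
    have h2 := hψ (t' t)
    have hAget : A.get (φ (t' t)) = f (xfin t) := by
      have hproof : i - 1 + (φ (t' t) : ℕ) < S.length := by
        have := hxbound t; omega
      have key := get_strSlice (S := S) h1i (le_of_lt hij) (by omega)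
        ((φ (t' t) : ℕ)) (hφlt t) hproof
      have key2 : S.get ⟨i - 1 + (φ (t' t) : ℕ), hproof⟩ = f (xfin t) :=
        (List.get_ofFn f _).trans (congrArg f (Fin.ext rfl))
      exact key.trans key2
    have hBget : B.get (ψ (t' t)) = f (yfin t) := by
      have hproof : j - 1 + (ψ (t' t) : ℕ) < S.length := by
        have := hybound t; omega
      have key := get_strSlice (S := S) (by omega) (le_of_lt hjk) (by omega)
        ((ψ (t' t) : ℕ)) (hψlt t) hproof
      have key2 : S.get ⟨j - 1 + (ψ (t' t) : ℕ), hproof⟩ = f (yfin t) :=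
        (List.get_ofFn f _).trans (congrArg f (Fin.ext rfl))
      exact key.trans key2
    rw [← hAget, ← hBget, ← h1, ← h2]
  -- build the event
  set X : Finset (Fin n) := Finset.image xfin univ with hX
  set Y : Finset (Fin n) := Finset.image yfin univ with hY
  have hXcard : X.card = m := by
    rw [hX, Finset.card_image_of_injective _ hxmono.injective, card_univ, Fintype.card_fin]
  have hYcard : Y.card = m := by
    rw [hY, Finset.card_image_of_injective _ hymono.injective, card_univ, Fintype.card_fin]
  have hcross : ∀ a ∈ X, ∀ b ∈ Y, (a : ℕ) < (b : ℕ) := by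
    intro a ha b hb
    obtain ⟨s, -, rfl⟩ := Finset.mem_image.mp ha
    obtain ⟨t, -, rfl⟩ := Finset.mem_image.mp hb
    have h1 := hφlt s
    simp only [hxfin, hyfin]
    omega
  have hgood : goodPair ε (X, Y) := by
    refine ⟨⟨xfin ⟨0, hm1⟩, Finset.mem_image_of_mem _ (mem_univ _)⟩, by rw [hXcard, hYcard], hcross, ?_⟩
    intro a ha b hb
    obtain ⟨s, -, rfl⟩ := Finset.mem_image.mp ha
    obtain ⟨t, -, rfl⟩ := Finset.mem_image.mp hb
    have h1 := hφlt s
    have h2 := hψlt t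
    have hble : (yfin t : ℕ) ≤ (xfin s : ℕ) + (l - 1) := by
      simp only [hxfin, hyfin]
      omega
    have hcast : ((yfin t : ℕ) : ℝ) - ((xfin s : ℕ) : ℝ) ≤ (l : ℝ) - 1 := by
      have hl1 : 1 ≤ l := by omega
      have : ((yfin t : ℕ) : ℝ) ≤ ((xfin s : ℕ) : ℝ) + ((l - 1 : ℕ) : ℝ) := by
        exact_mod_cast hble
      push_cast [Nat.cast_sub hl1] at this ⊢
      linarith
    have hXm : (X, Y).1.card = m := hXcard
    rw [hXm]
    calc ε * (((yfin t : ℕ) : ℝ) - ((xfin s : ℕ) : ℝ)) ≤ ε * ((l : ℝ) - 1) := by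
          apply mul_le_mul_of_nonneg_left hcast (le_of_lt hε0)
      _ < ε * l := by nlinarith
      _ ≤ 2 * m := hεl2m
  -- Matches
  have hmatch : Matches (X, Y) f := by
    intro t₁ t₂ hteq
    have hgX : (fun t : Fin X.card => xfin (Fin.cast hXcard t)) = X.orderEmbOfFin rfl := by
      apply Finset.orderEmbOfFin_unique rfl
      · intro t; exact Finset.mem_image_of_mem _ (mem_univ _)
      · intro a b hab
        exact hxmono (by rw [Fin.lt_def] at *; exact hab)
    have hgY : (fun t : Fin Y.card => yfin (Fin.cast hYcard t)) = Y.orderEmbOfFin rfl := by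
      apply Finset.orderEmbOfFin_unique rfl
      · intro t; exact Finset.mem_image_of_mem _ (mem_univ _)
      · intro a b hab
        exact hymono (by rw [Fin.lt_def] at *; exact hab)
    have h1 : (X, Y).1.orderEmbOfFin rfl t₁ = xfin (Fin.cast hXcard t₁) := by
      rw [← hgX]
    have h2 : (X, Y).2.orderEmbOfFin rfl t₂ = yfin (Fin.cast hYcard t₂) := by
      rw [← hgY]
    rw [h1, h2]
    have hsame : Fin.cast hXcard t₁ = Fin.cast hYcard t₂ := Fin.ext hteq
    rw [hsame]
    exact hval _
  exact hav (X, Y) hgood hmatch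


section main

variable {n q : ℕ} {ε : ℝ}

noncomputable def xw (q : ℕ) (p : EvIdx n) : ℝ := (2 / (q : ℝ)) ^ p.1.card

lemma q_large (hε0 : 0 < ε) (hε1 : ε < 1) (hq : (2592 : ℝ) / ε ^ 2 ≤ (q : ℝ)) :
    (2592 : ℝ) ≤ (q : ℝ) := by
  have hε2 : ε ^ 2 ≤ 1 := by nlinarith
  have hε2pos : 0 < ε ^ 2 := by positivity
  have : (2592 : ℝ) ≤ 2592 / ε ^ 2 := by
    rw [le_div_iff₀ hε2pos]
    nlinarith
  linarith

lemma xw_nonneg (p : EvIdx n) : 0 ≤ xw q p := by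
  unfold xw; positivity

lemma xw_le_one (hε0 : 0 < ε) (hε1 : ε < 1) (hq : (2592 : ℝ) / ε ^ 2 ≤ (q : ℝ))
    (p : EvIdx n) : xw q p ≤ 1 := by
  unfold xw
  apply pow_le_one₀ (by positivity)
  have h := q_large hε0 hε1 hq
  rw [div_le_one (by linarith)]
  linarith

lemma sum_x_le (hε0 : 0 < ε) (hε1 : ε < 1) (hq : (2592 : ℝ) / ε ^ 2 ≤ (q : ℝ)) (v : Fin n) :
    ∑ p ∈ (evIdxSet n ε).filter (fun p => v ∈ p.1 ∪ p.2), xw q p ≤ ε / 54 := by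
  classical
  have hqpos : (0:ℝ) < q := by
    have := q_large hε0 hε1 hq; linarith
  have hqne : (q:ℝ) ≠ 0 := ne_of_gt hqpos
  have hεne : ε ≠ 0 := ne_of_gt hε0
  set s := (evIdxSet n ε).filter (fun p => v ∈ p.1 ∪ p.2) with hs
  have hmaps : ∀ p ∈ s, p.1.card ∈ Finset.Icc 1 n := by
    intro p hp
    rw [hs, mem_filter] at hp
    have hgood : goodPair ε p := (mem_filter.mp hp.1).2
    rw [Finset.mem_Icc]
    constructor
    · rw [Nat.one_le_iff_ne_zero, ← Nat.pos_iff_ne_zero, card_pos]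
      exact hgood.1
    · calc p.1.card ≤ (univ : Finset (Fin n)).card := card_le_univ _
        _ = n := by rw [card_univ, Fintype.card_fin]
  have hsplit := Finset.sum_fiberwise_of_maps_to hmaps (xw q)
  rw [← hsplit]
  set ρ : ℝ := 648 / (ε ^ 2 * q) with hρ
  have hρ0 : 0 ≤ ρ := by rw [hρ]; positivity
  have hρ4 : ρ ≤ 1 / 4 := by
    rw [hρ, div_le_iff₀ (by positivity)]
    have h1 : (2592 : ℝ) ≤ ε ^ 2 * q := by
      rw [div_le_iff₀ (by positivity)] at hq
      nlinarith
    linarith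
  have hterm : ∀ m ∈ Finset.Icc 1 n,
      (∑ p ∈ s.filter (fun p => p.1.card = m), xw q p) ≤ (ε / 18) * ρ ^ m := by
    intro m hm
    obtain ⟨hm1, hmn⟩ := Finset.mem_Icc.mp hm
    have hconst : ∀ p ∈ s.filter (fun p => p.1.card = m), xw q p = (2 / (q:ℝ)) ^ m := by
      intro p hp
      rw [xw, (mem_filter.mp hp).2]
    rw [Finset.sum_congr rfl hconst, Finset.sum_const, nsmul_eq_mul]
    have hcount : ((s.filter (fun p => p.1.card = m)).card : ℝ) ≤ (18 / ε) ^ (2 * m - 1) := by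
      have h1 : s.filter (fun p => p.1.card = m)
          = (evIdxSet n ε).filter (fun p => v ∈ p.1 ∪ p.2 ∧ p.1.card = m) := by
        rw [hs, filter_filter]
      rw [h1]
      calc (((evIdxSet n ε).filter (fun p => v ∈ p.1 ∪ p.2 ∧ p.1.card = m)).card : ℝ)
          ≤ (((2 * ⌈(2 * m : ℝ) / ε⌉₊).choose (2 * m - 1) : ℕ) : ℝ) := by
            exact_mod_cast count_fiber hε0 v m hm1
        _ ≤ (18 / ε) ^ (2 * m - 1) := choose_window_bound hε0 hε1 m hm1
    have hppos : (0:ℝ) ≤ (2 / (q:ℝ)) ^ m := by positivity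
    have halg : (18 / ε) ^ (2 * m - 1) * (2 / (q:ℝ)) ^ m = (ε / 18) * ρ ^ m := by
      have h1 : ρ ^ m = ((18 / ε) ^ 2 * (2 / (q:ℝ))) ^ m := by
        congr 1
        rw [hρ, div_pow]
        field_simp
        ring
      rw [h1, mul_pow, ← pow_mul]
      have h2 : (18 / ε) ^ (2 * m) = (18 / ε) ^ (2 * m - 1) * (18 / ε) := by
        rw [← pow_succ]
        congr 1
        omega
      rw [h2]
      have h4 : (ε / 18) * (18 / ε) = 1 := by field_simp
      calc (18 / ε) ^ (2 * m - 1) * (2 / (q:ℝ)) ^ m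
          = ((ε / 18) * (18 / ε)) * ((18 / ε) ^ (2 * m - 1) * (2 / (q:ℝ)) ^ m) := by
            rw [h4, one_mul]
        _ = ε / 18 * ((18 / ε) ^ (2 * m - 1) * (18 / ε) * (2 / (q:ℝ)) ^ m) := by ring
    calc ((s.filter (fun p => p.1.card = m)).card : ℝ) * (2 / (q:ℝ)) ^ m
        ≤ (18 / ε) ^ (2 * m - 1) * (2 / (q:ℝ)) ^ m := by
          apply mul_le_mul_of_nonneg_right hcount hppos
      _ = (ε / 18) * ρ ^ m := halg
  calc ∑ m ∈ Finset.Icc 1 n, ∑ p ∈ s.filter (fun p => p.1.card = m), xw q p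
      ≤ ∑ m ∈ Finset.Icc 1 n, (ε / 18) * ρ ^ m := Finset.sum_le_sum hterm
    _ = (ε / 18) * ∑ m ∈ Finset.Icc 1 n, ρ ^ m := by rw [mul_sum]
    _ ≤ (ε / 18) * (1 / 3) := by
        apply mul_le_mul_of_nonneg_left (geom_quarter_sum n hρ0 hρ4) (by positivity)
    _ = ε / 54 := by ring

lemma cond_holds (hε0 : 0 < ε) (hε1 : ε < 1) (hq : (2592 : ℝ) / ε ^ 2 ≤ (q : ℝ))
    {p : EvIdx n} (hp : p ∈ evIdxSet n ε) :
    ((event p : Finset (Str n q)).card : ℝ) ≤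
      xw q p * (∏ j ∈ (evIdxSet n ε).filter
          (fun j => ¬ Disjoint (p.1 ∪ p.2) (j.1 ∪ j.2)), (1 - xw q j)) *
        (Fintype.card (Str n q) : ℝ) := by
  classical
  have hqpos : (0:ℝ) < q := by have := q_large hε0 hε1 hq; linarith
  have hqposn : 0 < q := by exact_mod_cast hqpos
  have hgood : goodPair ε p := (mem_filter.mp hp).2
  obtain ⟨hne, hcard, hlt, hspan⟩ := hgood
  set m := p.1.card with hm
  have hm1 : 1 ≤ m := by
    rw [hm, Nat.one_le_iff_ne_zero, ← Nat.pos_iff_ne_zero, card_pos]; exact hne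
  have hmn : m ≤ n := by
    calc m ≤ (univ : Finset (Fin n)).card := card_le_univ _
      _ = n := by rw [card_univ, Fintype.card_fin]
  have hQ : (Fintype.card (Str n q) : ℝ) = (q:ℝ) ^ n := by
    rw [Fintype.card_fun, Fintype.card_fin, Fintype.card_fin]
    push_cast
    ring
  -- event card
  have hcard1 : ((event p : Finset (Str n q)).card : ℝ) ≤ (q:ℝ) ^ (n - m) := by
    have := card_event_le (q := q) (n := n) p hcard hlt
    calc ((event p : Finset (Str n q)).card : ℝ) ≤ ((q ^ (n - m) : ℕ) : ℝ) := by
          exact_mod_cast this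
      _ = (q:ℝ) ^ (n - m) := by push_cast; ring
  -- neighbor set as biUnion
  have hΓ : (evIdxSet n ε).filter (fun j => ¬ Disjoint (p.1 ∪ p.2) (j.1 ∪ j.2))
      = (p.1 ∪ p.2).biUnion (fun v => (evIdxSet n ε).filter (fun j => v ∈ j.1 ∪ j.2)) := by
    ext j
    simp only [mem_filter, mem_biUnion]
    constructor
    · rintro ⟨hj, hnd⟩
      obtain ⟨v, hv1, hv2⟩ := not_disjoint_iff.mp hnd
      exact ⟨v, hv1, hj, hv2⟩
    · rintro ⟨v, hv, hj, hv2⟩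
      exact ⟨hj, not_disjoint_iff.mpr ⟨v, hv, hv2⟩⟩
  have hg0 : ∀ j : EvIdx n, 0 ≤ 1 - xw q j := by
    intro j
    have := xw_le_one (q := q) hε0 hε1 hq j
    linarith
  have hg1 : ∀ j : EvIdx n, 1 - xw q j ≤ 1 := by
    intro j
    have := xw_nonneg (q := q) j
    linarith
  have hprod1 : ∏ v ∈ p.1 ∪ p.2, ∏ j ∈ (evIdxSet n ε).filter (fun j => v ∈ j.1 ∪ j.2),
        (1 - xw q j)
      ≤ ∏ j ∈ (evIdxSet n ε).filter (fun j => ¬ Disjoint (p.1 ∪ p.2) (j.1 ∪ j.2)),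
        (1 - xw q j) := by
    rw [hΓ]
    have := prod_biUnion_ge (p.1 ∪ p.2)
      (fun v => (evIdxSet n ε).filter (fun j => v ∈ j.1 ∪ j.2))
      (fun j => 1 - xw q j) hg0 hg1
    exact this
  have hinner : ∀ v : Fin n, (53 / 54 : ℝ) ≤
      ∏ j ∈ (evIdxSet n ε).filter (fun j => v ∈ j.1 ∪ j.2), (1 - xw q j) := by
    intro v
    have hw := weierstrass ((evIdxSet n ε).filter (fun j => v ∈ j.1 ∪ j.2)) (xw q)
      (fun j _ => xw_nonneg j) (fun j _ => xw_le_one hε0 hε1 hq j)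
    have hsum := sum_x_le hε0 hε1 hq v
    have : ε / 54 ≤ 1 / 54 := by linarith
    linarith
  have hVcard : (p.1 ∪ p.2).card = 2 * m := by
    rw [card_union_of_disjoint (disjoint_of_lt hlt), ← hcard]
    omega
  have hprod2 : ((53 / 54 : ℝ)) ^ (2 * m) ≤
      ∏ v ∈ p.1 ∪ p.2, ∏ j ∈ (evIdxSet n ε).filter (fun j => v ∈ j.1 ∪ j.2), (1 - xw q j) := by
    rw [← hVcard, ← Finset.prod_const]
    apply Finset.prod_le_prod
    · intro v _; norm_num
    · intro v _; exact hinner v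
  have hhalf : ((1:ℝ) / 2) ^ m ≤ ((53 / 54 : ℝ)) ^ (2 * m) := by
    rw [pow_mul]
    apply pow_le_pow_left₀ (by norm_num)
    norm_num
  have hchain : ((1:ℝ) / 2) ^ m ≤
      ∏ j ∈ (evIdxSet n ε).filter (fun j => ¬ Disjoint (p.1 ∪ p.2) (j.1 ∪ j.2)),
        (1 - xw q j) := le_trans hhalf (le_trans hprod2 hprod1)
  have hA : xw q p * ((1:ℝ)/2) ^ m * (q:ℝ) ^ n = (q:ℝ) ^ (n - m) := by
    have hsplitpow : (q:ℝ) ^ n = (q:ℝ) ^ (n - m) * (q:ℝ) ^ m := by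
      rw [← pow_add]
      congr 1
      omega
    rw [xw, ← hm, hsplitpow]
    calc (2 / (q:ℝ)) ^ m * ((1:ℝ)/2) ^ m * ((q:ℝ) ^ (n - m) * (q:ℝ) ^ m)
        = ((2 / (q:ℝ)) * ((1:ℝ)/2) * (q:ℝ)) ^ m * (q:ℝ) ^ (n - m) := by
          rw [mul_pow, mul_pow]; ring
      _ = 1 ^ m * (q:ℝ) ^ (n - m) := by
          have hone : (2 / (q:ℝ)) * ((1:ℝ)/2) * (q:ℝ) = 1 := by
            field_simp
          rw [hone]
      _ = (q:ℝ) ^ (n - m) := by rw [one_pow, one_mul]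
  rw [hQ]
  calc ((event p : Finset (Str n q)).card : ℝ) ≤ (q:ℝ) ^ (n - m) := hcard1
    _ = xw q p * ((1:ℝ)/2) ^ m * (q:ℝ) ^ n := hA.symm
    _ ≤ xw q p * (∏ j ∈ (evIdxSet n ε).filter
          (fun j => ¬ Disjoint (p.1 ∪ p.2) (j.1 ∪ j.2)), (1 - xw q j)) * (q:ℝ) ^ n := by
        apply mul_le_mul_of_nonneg_right _ (by positivity)
        apply mul_le_mul_of_nonneg_left hchain (xw_nonneg p)

end main

/-- `xw` is strictly below `1` on valid events. -/
lemma xw_lt_one {n q : ℕ} {ε : ℝ} (hε0 : 0 < ε) (hε1 : ε < 1)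
    (hq : (2592 : ℝ) / ε ^ 2 ≤ (q : ℝ)) {p : EvIdx n} (hp : p ∈ evIdxSet n ε) :
    xw q p < 1 := by
  have hgood : goodPair ε p := mem_evIdxSet.mp hp
  have hm1 : p.1.card ≠ 0 := by
    rw [← Nat.pos_iff_ne_zero, card_pos]
    exact hgood.1
  unfold xw
  apply pow_lt_one₀ (by positivity) _ hm1
  have h := q_large hε0 hε1 hq
  rw [div_lt_one (by linarith)]
  linarith

end SyncAux

/-- There exists an absolute constant `C > 0` such that for every
`ε ∈ (0,1)` and every `n ∈ ℕ` there exists an ε-synchronization string of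
length `n` over an alphabet of size at most `C·ε⁻²`. -/
theorem exists_sync_string_alphabet_eps_sq :
    ∃ C : ℝ, 0 < C ∧ ∀ ε : ℝ, 0 < ε → ε < 1 → ∀ n : ℕ,
      ∃ (q : ℕ) (S : List (Fin q)),
        (q : ℝ) ≤ C / ε ^ 2 ∧ S.length = n ∧ IsSyncString ε S := by
  classical
  refine ⟨2593, by norm_num, ?_⟩
  intro ε hε0 hε1 n
  set q := ⌈(2592:ℝ)/ε^2⌉₊ with hqdef
  have hε2pos : (0:ℝ) < ε^2 := by positivity
  have hqlb : (2592:ℝ)/ε^2 ≤ (q:ℝ) := Nat.le_ceil _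
  have hqub : (q:ℝ) ≤ 2593/ε^2 := by
    have h1 : (q:ℝ) < 2592/ε^2 + 1 := Nat.ceil_lt_add_one (by positivity)
    have h2 : (1:ℝ) ≤ 1/ε^2 := by
      rw [le_div_iff₀ hε2pos]
      nlinarith
    have h3 : (2593:ℝ)/ε^2 = 2592/ε^2 + 1/ε^2 := by ring
    linarith
  have hqpos : 0 < q := by
    have : (0:ℝ) < (q:ℝ) := lt_of_lt_of_le (by positivity) hqlb
    exact_mod_cast this
  obtain ⟨f, hf⟩ := SyncAux.lll (n := n) (q := q) (SyncAux.evIdxSet n ε)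
    (fun p => SyncAux.event p)
    (fun p => p.1 ∪ p.2) (SyncAux.xw q) hqpos
    (fun p _ => SyncAux.xw_nonneg p)
    (fun p hp => SyncAux.xw_lt_one hε0 hε1 hqlb hp)
    (fun p => SyncAux.determines_event p)
    (fun p hp => SyncAux.cond_holds hε0 hε1 hqlb hp)
  refine ⟨q, List.ofFn f, hqub, List.length_ofFn, ?_⟩
  apply SyncAux.reduction hε0 f
  intro p hgood hmatch
  exact hf p (SyncAux.mem_evIdxSet.mpr hgood) (SyncAux.mem_event.mpr hmatch)
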